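/- Let x solve the perturbed dynamic ẍ(t) + (α/t)ẋ(t) + ∇_x f̃(x(t),μ(t)) = g(t) with α > 0, inf f > −∞, and ∫_{t₀}^∞ ‖g(s)‖ ds < ∞. Then sup_{t ≥ t₀} ‖ẋ(t)‖ < ∞ and ∫_{t₀}^∞ (1/t)‖ẋ(t)‖² dt < ∞. -/

import Mathlib

open MeasureTheory Filter Asymptotics Set
open scoped RealInnerProductSpace

lemma convex_grad_ineq {H : Type*} [NormedAddCommGroup H] [InnerProductSpace ℝ H]
    [CompleteSpace H] {φ : H → ℝ} (hφ : ConvexOn ℝ Set.univ φ) {z Gz : H}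
    (hg : HasGradientAt φ Gz z) (y : H) : φ z + ⟪Gz, y - z⟫ ≤ φ y := by
  set c : ℝ → H := fun t => z + t • (y - z) with hc
  have hcd : HasDerivAt c (y - z) 0 := by
    simpa [hc] using ((hasDerivAt_id (0:ℝ)).smul_const (y - z)).const_add z
  have hc0 : c 0 = z := by simp [hc]
  have hF : HasFDerivAt φ (InnerProductSpace.toDual ℝ H Gz) z := hg.hasFDerivAt
  have hcomp : HasDerivAt (fun t => φ (c t)) ⟪Gz, y - z⟫ 0 := by
    have := (hc0 ▸ hF).comp_hasDerivAt 0 hcd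
    simpa [InnerProductSpace.toDual_apply_apply, Function.comp_def] using this
  have hslope : Filter.Tendsto (slope (fun t => φ (c t)) 0) (nhdsWithin 0 (Set.Ioi 0))
      (nhds ⟪Gz, y - z⟫) := by
    have := hasDerivAt_iff_tendsto_slope.1 hcomp
    exact this.mono_left (nhdsWithin_mono _ (fun t ht => ne_of_gt ht))
  have hev : ∀ᶠ t in nhdsWithin (0:ℝ) (Set.Ioi 0),
      slope (fun t => φ (c t)) 0 t ≤ φ y - φ z := by
    filter_upwards [Ioc_mem_nhdsGT_of_mem (Set.left_mem_Ico.2 zero_lt_one)] with t ht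
    have h01 : (0:ℝ) < t := ht.1
    have ht1 : t ≤ 1 := ht.2
    have hconv := hφ.2 (Set.mem_univ z) (Set.mem_univ y) (by linarith : (0:ℝ) ≤ 1 - t)
      h01.le (by ring)
    have hct : c t = (1 - t) • z + t • y := by
      rw [hc]; simp only []; rw [sub_smul, one_smul, smul_sub]; abel
    have : φ (c t) - φ (c 0) ≤ t * (φ y - φ z) := by
      rw [hct, hc0]
      simp only [smul_eq_mul] at hconv
      nlinarith [hconv]
    rw [slope_def_field, sub_zero, div_le_iff₀ h01]
    simpa [mul_comm] using this
  have := le_of_tendsto hslope hev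
  linarith [this]

theorem stmt14 {H : Type*} [NormedAddCommGroup H] [InnerProductSpace ℝ H] [CompleteSpace H]
    (f : H → ℝ) (hf : ConvexOn ℝ Set.univ f)
    (ftil : H → ℝ → ℝ) (κ : ℝ) (hκ : 0 < κ)
    (hconv : ∀ m : ℝ, 0 < m → ConvexOn ℝ Set.univ (fun z => ftil z m))
    (dmu : H → ℝ → ℝ)
    (hdmu : ∀ (z : H) (m : ℝ), 0 < m → HasDerivAt (fun m' => ftil z m') (dmu z m) m)
    (hdmubd : ∀ (z : H) (m : ℝ), 0 < m → |dmu z m| ≤ κ)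
    (happrox : ∀ (z : H) (m : ℝ), 0 < m → |ftil z m - f z| ≤ κ * m)
    (G : H → ℝ → H)
    (hG : ∀ (z : H) (m : ℝ), 0 < m → HasGradientAt (fun w => ftil w m) (G z m) z)
    (g : ℝ → H)
    (t₀ α : ℝ) (ht₀ : 0 < t₀) (hα : 0 < α)
    (μ μ' : ℝ → ℝ) (hμpos : ∀ t, t₀ ≤ t → 0 < μ t)
    (hμderiv : ∀ t, t₀ ≤ t → HasDerivAt μ (μ' t) t)
    (hμdec : ∀ t, t₀ ≤ t → μ' t ≤ 0)
    (hμlim : Filter.Tendsto μ Filter.atTop (nhds 0))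
    (x x' x'' : ℝ → H)
    (hx : ∀ t, t₀ ≤ t → HasDerivAt x (x' t) t)
    (hx' : ∀ t, t₀ ≤ t → HasDerivAt x' (x'' t) t)
    (heq : ∀ t, t₀ ≤ t → x'' t + (α / t) • x' t + G (x t) (μ t) = g t)
    (hbdd : BddBelow (Set.range f))
    (hgint : IntegrableOn (fun t => ‖g t‖) (Set.Ici t₀)) :
    (∃ C : ℝ, ∀ t, t₀ ≤ t → ‖x' t‖ ≤ C) ∧
      IntegrableOn (fun t => (1 / t) * ‖x' t‖^2) (Set.Ici t₀) := by
  classical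
  have hκ0 : (0:ℝ) ≤ κ := hκ.le
  set c₀ : ℝ := sInf (Set.range f) with hc₀def
  have hc₀ : ∀ z : H, c₀ ≤ f z := fun z => csInf_le hbdd ⟨z, rfl⟩
  have hxc : ∀ t, t₀ ≤ t → ContinuousAt x t := fun t ht => (hx t ht).continuousAt
  have hx'c : ∀ t, t₀ ≤ t → ContinuousAt x' t := fun t ht => (hx' t ht).continuousAt
  have hμc : ∀ t, t₀ ≤ t → ContinuousAt μ t := fun t ht => (hμderiv t ht).continuousAt
  -- μ is antitone on [t₀, ∞)
  have hμanti : AntitoneOn μ (Set.Ici t₀) := by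
    apply antitoneOn_of_deriv_nonpos (convex_Ici t₀)
    · exact fun t ht => (hμc t ht).continuousWithinAt
    · intro t ht
      rw [interior_Ici] at ht
      exact ((hμderiv t ht.le).differentiableAt).differentiableWithinAt
    · intro t ht
      rw [interior_Ici] at ht
      rw [(hμderiv t ht.le).deriv]
      exact hμdec t ht.le
  -- ftil is κ-Lipschitz in the smoothing parameter
  have hmLip : ∀ (z : H) (m₁ m₂ : ℝ), 0 < m₁ → 0 < m₂ →
      |ftil z m₁ - ftil z m₂| ≤ κ * |m₁ - m₂| := by
    intro z m₁ m₂ h₁ h₂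
    have := (convex_Ioi (0:ℝ)).norm_image_sub_le_of_norm_hasDerivWithin_le
      (f := fun m => ftil z m) (f' := fun m => dmu z m)
      (fun m hm => (hdmu z m hm).hasDerivWithinAt)
      (fun m hm => by rw [Real.norm_eq_abs]; exact hdmubd z m hm) h₂ h₁
    simpa [Real.norm_eq_abs] using this
  set ψ : ℝ → ℝ := fun t => ftil (x t) (μ t) + κ * μ t with hψdef
  set K : ℝ → ℝ := fun t => (1/2) * ‖x' t‖^2 with hKdef
  set E : ℝ → ℝ := fun t => ψ t - c₀ + K t with hEdef
  have hψge : ∀ t, t₀ ≤ t → f (x t) ≤ ψ t := by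
    intro t ht
    have h := abs_le.1 (happrox (x t) (μ t) (hμpos t ht))
    simp only [hψdef]; linarith [h.1]
  have hK0 : ∀ t, 0 ≤ K t := fun t => by simp only [hKdef]; positivity
  have hKE : ∀ t, t₀ ≤ t → K t ≤ E t := by
    intro t ht
    have h1 := hψge t ht
    have h2 := hc₀ (x t)
    simp only [hEdef]; linarith
  have hE0 : ∀ t, t₀ ≤ t → 0 ≤ E t := fun t ht => le_trans (hK0 t) (hKE t ht)
  -- derivative of kinetic energy
  have hKd : ∀ t, t₀ ≤ t → HasDerivAt K ⟪x'' t, x' t⟫ t := by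
    intro t ht
    have h1 := (HasDerivAt.inner ℝ (hx' t ht) (hx' t ht)).const_mul (1/2 : ℝ)
    have h2 : (fun s => (1/2 : ℝ) * ⟪x' s, x' s⟫) = K := by
      funext s; rw [hKdef, real_inner_self_eq_norm_sq]
    rw [h2] at h1
    refine h1.congr_deriv ?_
    rw [real_inner_comm (x' t) (x'' t)]; ring
  -- continuity of ψ on [t₀, ∞)
  have hψcont : ContinuousOn ψ (Set.Ici t₀) := by
    intro s hs
    have hμs : 0 < μ s := hμpos s hs
    have hFc : ContinuousAt (fun t => ftil (x t) (μ s)) s :=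
      ((hG (x s) (μ s) hμs).differentiableAt.continuousAt).comp (hxc s hs)
    have hrest : Filter.Tendsto (fun t => ftil (x t) (μ t) - ftil (x t) (μ s))
        (nhdsWithin s (Set.Ici t₀)) (nhds 0) := by
      apply squeeze_zero_norm'
      · filter_upwards [self_mem_nhdsWithin] with t ht
        calc ‖ftil (x t) (μ t) - ftil (x t) (μ s)‖
            = |ftil (x t) (μ t) - ftil (x t) (μ s)| := rfl
          _ ≤ κ * |μ t - μ s| := hmLip (x t) _ _ (hμpos t ht) hμs
      · have h0 : Filter.Tendsto (fun t => κ * |μ t - μ s|) (nhdsWithin s (Set.Ici t₀))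
            (nhds (κ * |μ s - μ s|)) :=
          ((((hμc s hs).continuousWithinAt).sub tendsto_const_nhds).abs).const_mul κ
        simpa using h0
    have h1 : Filter.Tendsto (fun t => ftil (x t) (μ s) + κ * μ t
        + (ftil (x t) (μ t) - ftil (x t) (μ s))) (nhdsWithin s (Set.Ici t₀))
        (nhds (ftil (x s) (μ s) + κ * μ s + 0)) :=
      Filter.Tendsto.add
        (Filter.Tendsto.add hFc.continuousWithinAt
          (((hμc s hs).continuousWithinAt).const_mul κ)) hrest
    have h2 : (fun t => ftil (x t) (μ s) + κ * μ t + (ftil (x t) (μ t) - ftil (x t) (μ s)))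
        = ψ := by
      funext t; rw [hψdef]; ring
    rw [h2] at h1
    have h3 : ftil (x s) (μ s) + κ * μ s + 0 = ψ s := by rw [hψdef]; ring
    rw [h3] at h1
    exact h1
  -- the key convexity sandwich
  have hsand : ∀ s t, t₀ ≤ s → s ≤ t → ψ t - ψ s ≤ ⟪G (x t) (μ t), x t - x s⟫ := by
    intro s t hs hst
    have ht : t₀ ≤ t := hs.trans hst
    have hμt : 0 < μ t := hμpos t ht
    have hμs : 0 < μ s := hμpos s hs
    have h1 := convex_grad_ineq (hconv (μ t) hμt) (hG (x t) (μ t) hμt) (x s)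
    have h2 := abs_le.1 (hmLip (x s) (μ t) (μ s) hμt hμs)
    have h3 : μ t ≤ μ s := hμanti hs ht hst
    have h4 : ⟪G (x t) (μ t), x s - x t⟫ = -⟪G (x t) (μ t), x t - x s⟫ := by
      rw [← inner_neg_right]; congr 1; abel
    have h5 : |μ t - μ s| = μ s - μ t := by rw [abs_of_nonpos (by linarith)]; ring
    rw [h4] at h1; rw [h5] at h2
    simp only [hψdef]; linarith [h1, h2.1, h2.2]
  -- continuity of E
  have hKcont : ContinuousOn K (Set.Ici t₀) := by
    have : ContinuousOn (fun t => (1/2 : ℝ) * ‖x' t‖^2) (Set.Ici t₀) :=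
      fun s hs => (continuousAt_const.mul (((hx'c s hs).norm).pow 2)).continuousWithinAt
    rw [hKdef]; exact this
  have hEcont : ContinuousOn E (Set.Ici t₀) := by
    have : ContinuousOn (fun t => ψ t - c₀ + K t) (Set.Ici t₀) :=
      (hψcont.sub continuousOn_const).add hKcont
    rw [hEdef]; exact this
  set ρ : ℝ → ℝ := fun τ => ‖g τ‖ * ‖x' τ‖ with hρdef
  set h₂ : ℝ → ℝ := fun τ => (α / τ) * ‖x' τ‖^2 with hh₂def
  have hρ0 : ∀ τ, 0 ≤ ρ τ := by
    intro τ; rw [hρdef]; positivity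
  have hh₂cont : ∀ τ, t₀ ≤ τ → ContinuousAt h₂ τ := by
    intro τ hτ
    have hτ0 : τ ≠ 0 := (lt_of_lt_of_le ht₀ hτ).ne'
    have : ContinuousAt (fun τ => (α / τ) * ‖x' τ‖^2) τ :=
      (continuousAt_const.div continuousAt_id hτ0).mul (((hx'c τ hτ).norm).pow 2)
    rw [hh₂def]; exact this
  have hh₂0 : ∀ τ, t₀ ≤ τ → 0 ≤ h₂ τ := by
    intro τ hτ
    have hτ0 : (0:ℝ) < τ := lt_of_lt_of_le ht₀ hτ
    rw [hh₂def]
    have : 0 ≤ α / τ := le_of_lt (div_pos hα hτ0)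
    positivity
  -- integrability of ρ on compact subintervals
  have hρIcc : ∀ a b : ℝ, t₀ ≤ a → a ≤ b → IntegrableOn ρ (Set.Icc a b) := by
    intro a b ha hab
    have hab' : Set.Icc a b ⊆ Set.Ici t₀ := fun τ hτ => le_trans ha hτ.1
    have hgIcc : IntegrableOn (fun τ => ‖g τ‖) (Set.Icc a b) := hgint.mono_set hab'
    have hx'On : ContinuousOn x' (Set.Icc a b) :=
      fun τ hτ => (hx'c τ (hab' hτ)).continuousWithinAt
    obtain ⟨C₁, hC₁⟩ := isCompact_Icc.exists_bound_of_continuousOn hx'On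
    have hC₁0 : 0 ≤ C₁ := le_trans (norm_nonneg _) (hC₁ a (Set.left_mem_Icc.2 hab))
    have hmeas : AEStronglyMeasurable ρ (volume.restrict (Set.Icc a b)) := by
      rw [hρdef]
      exact (hgIcc.aestronglyMeasurable).mul
        ((hx'On.norm).aestronglyMeasurable measurableSet_Icc)
    apply Integrable.mono' (hgIcc.mul_const C₁) hmeas
    rw [ae_restrict_iff' measurableSet_Icc]
    refine Filter.Eventually.of_forall (fun τ hτ => ?_)
    rw [Real.norm_eq_abs, abs_of_nonneg (hρ0 τ), hρdef]
    exact mul_le_mul_of_nonneg_left (hC₁ τ hτ) (norm_nonneg _)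
  -- the master energy inequality
  have key : ∀ a b : ℝ, t₀ ≤ a → a ≤ b →
      E b + ∫ τ in a..b, h₂ τ ≤ E a + ∫ τ in Set.Icc a b, ρ τ := by
    intro a b ha hab
    have hab' : Set.Icc a b ⊆ Set.Ici t₀ := fun τ hτ => le_trans ha hτ.1
    have hρint : IntegrableOn ρ (Set.Icc a b) := hρIcc a b ha hab
    have hh₂On : ContinuousOn h₂ (Set.Icc a b) :=
      fun τ hτ => (hh₂cont τ (hab' hτ)).continuousWithinAt
    have hh₂ii : ∀ u v : ℝ, u ∈ Set.Icc a b → v ∈ Set.Icc a b →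
        IntervalIntegrable h₂ volume u v := by
      intro u v hu hv
      apply ContinuousOn.intervalIntegrable
      exact hh₂On.mono (Set.uIcc_subset_Icc hu hv)
    set w : ℝ → ℝ := fun t => E t + ∫ τ in a..t, h₂ τ with hwdef
    have hwcont : ContinuousOn w (Set.Icc a b) := by
      have h1 : IntegrableOn h₂ (Set.uIcc a b) := by
        rw [Set.uIcc_of_le hab]; exact hh₂On.integrableOn_compact isCompact_Icc
      have h2 := intervalIntegral.continuousOn_primitive_interval (μ := volume)
        (f := h₂) (a := a) (b := b) h1
      rw [Set.uIcc_of_le hab] at h2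
      rw [hwdef]
      exact (hEcont.mono hab').add h2
    refine le_of_forall_pos_le_add (fun ε hε => ?_)
    -- Vitali–Carathéodory majorant
    set ρhat : ℝ → ℝ := fun τ => (Set.Icc a b).indicator ρ τ with hρhatdef
    have hρhatint : Integrable ρhat volume := by
      rw [hρhatdef]
      exact (integrable_indicator_iff measurableSet_Icc).2 hρint
    obtain ⟨Gt, hGtlt, hGtlsc, hGtint, hGttop, hGtsum⟩ :=
      exists_lt_lowerSemicontinuous_integral_lt (μ := volume) ρhat hρhatint hε
    have hρhat0 : ∀ τ, 0 ≤ ρhat τ := by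
      intro τ; rw [hρhatdef]
      exact Set.indicator_nonneg (fun τ _ => hρ0 τ) τ
    have hGt0 : ∀ τ, 0 ≤ (Gt τ).toReal := by
      intro τ
      rcases eq_or_ne (Gt τ) ⊤ with h | h
      · simp [h]
      · have h0 : (0 : EReal) ≤ Gt τ :=
          le_of_lt (lt_of_le_of_lt (by exact_mod_cast hρhat0 τ) (hGtlt τ))
        have := EReal.toReal_le_toReal h0 (by simp) h
        simpa using this
    have hGtii : ∀ u v : ℝ, IntervalIntegrable (fun τ => (Gt τ).toReal) volume u v :=
      fun u v => hGtint.intervalIntegrable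
    set B : ℝ → ℝ := fun z => ∫ τ in a..z, (Gt τ).toReal with hBdef
    have hBcont : ContinuousOn B (Set.Icc a b) := by
      have h1 := intervalIntegral.continuousOn_primitive_interval (μ := volume)
        (f := fun τ => (Gt τ).toReal) (a := a) (b := b) hGtint.integrableOn
      rw [Set.uIcc_of_le hab] at h1
      rw [hBdef]; exact h1
    set T : Set ℝ := {t | t ∈ Set.Icc a b ∧ w b - w t ≤ B b - B t} with hTdef
    have hTb : b ∈ T := ⟨Set.right_mem_Icc.2 hab, by simp⟩
    have hTclosed : IsClosed T := by
      have hwB : ContinuousOn (fun t => w t - B t) (Set.Icc a b) := hwcont.sub hBcont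
      have hTeq : T = Set.Icc a b ∩ (fun t => w t - B t) ⁻¹' (Set.Ici (w b - B b)) := by
        ext t
        simp only [hTdef, Set.mem_setOf_eq, Set.mem_inter_iff, Set.mem_preimage, Set.mem_Ici]
        constructor
        · rintro ⟨h1, h2⟩; exact ⟨h1, by linarith⟩
        · rintro ⟨h1, h2⟩; exact ⟨h1, by linarith⟩
      rw [hTeq]
      exact hwB.preimage_isClosed_of_isClosed isClosed_Icc isClosed_Ici
    have hTne : T.Nonempty := ⟨b, hTb⟩
    have hTbdd : BddBelow T := ⟨a, fun t ht => ht.1.1⟩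
    have hcT : sInf T ∈ T := hTclosed.csInf_mem hTne hTbdd
    set c := sInf T with hcdef
    have hca : a ≤ c := hcT.1.1
    have hcb : c ≤ b := hcT.1.2
    have haT : a ∈ T := by
      rcases eq_or_lt_of_le hca with h | hac
      · rwa [h]
      · exfalso
        have hct₀ : t₀ ≤ c := ha.trans hca
        have hρhatc : ρhat c = ρ c := by rw [hρhatdef]; exact Set.indicator_of_mem hcT.1 ρ
        obtain ⟨r, hr1, hr2⟩ := EReal.lt_iff_exists_real_btwn.1 (hρhatc ▸ hGtlt c)
        have hρcr : ρ c < r := by exact_mod_cast hr1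
        have hr0 : 0 ≤ r := le_of_lt (lt_of_le_of_lt (hρ0 c) hρcr)
        obtain ⟨δ, hδ0, hδ⟩ := Metric.eventually_nhds_iff.1 (hGtlsc c r hr2)
        -- the comparison function Φ
        set Gc := G (x c) (μ c) with hGcdef
        set Φ : ℝ → ℝ := fun z => ⟪Gc, x c - x z⟫ + (K c - K z)
            + ((∫ τ in a..c, h₂ τ) - ∫ τ in a..z, h₂ τ) with hΦdef
        have hΦc : Φ c = 0 := by rw [hΦdef]; simp
        have hd1 : HasDerivAt (fun z => ⟪Gc, x c - x z⟫) (-⟪Gc, x' c⟫) c := by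
          have h := HasDerivAt.inner ℝ (hasDerivAt_const c Gc)
            ((hasDerivAt_const c (x c)).sub (hx c hct₀))
          simpa using h
        have hd2 : HasDerivAt (fun z => K c - K z) (-⟪x'' c, x' c⟫) c :=
          (hKd c hct₀).const_sub (K c)
        have hd3 : HasDerivAt (fun z => (∫ τ in a..c, h₂ τ) - ∫ τ in a..z, h₂ τ)
            (-h₂ c) c := by
          have hint : IntervalIntegrable h₂ volume a c :=
            hh₂ii a c (Set.left_mem_Icc.2 hab) hcT.1
          have hmeasf : StronglyMeasurableAtFilter h₂ (nhds c) := by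
            have hopen : ContinuousOn h₂ (Set.Ioi t₀) :=
              fun τ hτ => (hh₂cont τ (le_of_lt hτ)).continuousWithinAt
            exact hopen.stronglyMeasurableAtFilter isOpen_Ioi c
              (lt_of_le_of_lt ha hac)
          have h := intervalIntegral.integral_hasDerivAt_right hint hmeasf
            (hh₂cont c hct₀)
          exact h.const_sub _
        have hΦd : HasDerivAt Φ (-⟪g c, x' c⟫) c := by
          have h := (hd1.add hd2).add hd3
          have hval : ⟪g c, x' c⟫ = ⟪Gc, x' c⟫ + ⟪x'' c, x' c⟫ + h₂ c := by
            rw [← heq c hct₀, hGcdef, hh₂def]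
            have hc0 : c ≠ 0 := (lt_of_lt_of_le ht₀ hct₀).ne'
            simp only [inner_add_left, real_inner_smul_left, real_inner_self_eq_norm_sq]
            ring
          rw [hΦdef]
          refine h.congr_deriv ?_
          rw [hval]; ring
        have hslope : Filter.Tendsto (fun z => Φ z / (c - z)) (nhdsWithin c (Set.Iio c))
            (nhds ⟪g c, x' c⟫) := by
          have h := (hasDerivAt_iff_tendsto_slope.1 hΦd).mono_left
            (nhdsWithin_mono _ (fun z (hz : z ∈ Set.Iio c) => ne_of_lt hz))
          have h3 := h.neg
          rw [neg_neg] at h3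
          apply h3.congr'
          filter_upwards [self_mem_nhdsWithin] with z hz
          have hzc : z < c := hz
          rw [slope_def_field, hΦc, sub_zero, show c - z = -(z - c) by ring, div_neg]
        have hgx : ⟪g c, x' c⟫ < r := lt_of_le_of_lt
          (le_trans (real_inner_le_norm _ _) (le_refl _)) hρcr
        have hevslope : ∀ᶠ z in nhdsWithin c (Set.Iio c), Φ z ≤ r * (c - z) := by
          filter_upwards [hslope.eventually_lt_const hgx |>.mono (fun z hz => hz),
            self_mem_nhdsWithin] with z h1z (h2z : z ∈ Set.Iio c)
          have hcz : (0:ℝ) < c - z := by simp at h2z; linarith [h2z]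
          have := (div_lt_iff₀ hcz).1 h1z
          linarith
        have hIoo : Set.Ioo a c ∈ nhdsWithin c (Set.Iio c) :=
          Ioo_mem_nhdsLT_of_mem ⟨hac, le_refl c⟩
        have hball : Set.Ioo (c - δ) c ∈ nhdsWithin c (Set.Iio c) :=
          Ioo_mem_nhdsLT_of_mem ⟨by linarith, le_refl c⟩
        obtain ⟨z, hz1, hz2, hz3⟩ :=
          (hevslope.and ((Filter.eventually_mem_set.2 hIoo).and (Filter.eventually_mem_set.2 hball))).exists
        have hzc : z < c := hz2.2
        have hza : a < z := hz2.1
        have hzt₀ : t₀ ≤ z := ha.trans hza.le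
        have hzb : z ≤ b := le_trans hzc.le hcb
        have hzIcc : z ∈ Set.Icc a b := ⟨hza.le, hzb⟩
        -- w c - w z ≤ Φ z
        have hwc : w c - w z ≤ Φ z := by
          have hs := hsand z c hzt₀ hzc.le
          rw [hwdef, hΦdef, hEdef]
          simp only []
          rw [hGcdef]
          linarith [hs]
        -- r * (c - z) ≤ B c - B z
        have hBz : r * (c - z) ≤ B c - B z := by
          have hsplit : (∫ τ in a..z, (Gt τ).toReal) + (∫ τ in z..c, (Gt τ).toReal)
              = ∫ τ in a..c, (Gt τ).toReal :=
            intervalIntegral.integral_add_adjacent_intervals (hGtii a z) (hGtii z c)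
          have hmono : (∫ _ in z..c, r) ≤ ∫ τ in z..c, (Gt τ).toReal := by
            apply intervalIntegral.integral_mono_ae_restrict hzc.le
              intervalIntegrable_const (hGtii z c)
            have h1 : ∀ᵐ τ ∂(volume.restrict (Set.Icc z c)), Gt τ < ⊤ :=
              ae_restrict_of_ae hGttop
            filter_upwards [h1, ae_restrict_mem measurableSet_Icc] with τ h1τ h2τ
            have hdist : dist τ c < δ := by
              rw [Real.dist_eq, abs_of_nonpos (by linarith [h2τ.2])]
              have := h2τ.1
              have := hz3.1
              linarith
            have hrτ : (r : EReal) < Gt τ := hδ hdist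
            have := EReal.toReal_le_toReal (le_of_lt hrτ) (by simp) (ne_of_lt h1τ)
            simpa using this
          rw [intervalIntegral.integral_const, smul_eq_mul] at hmono
          rw [hBdef]
          simp only []
          rw [← hsplit]
          linarith [hmono]
        have hzT : z ∈ T := by
          refine ⟨hzIcc, ?_⟩
          have h1 := hcT.2
          have h2 : w c - w z ≤ B c - B z := le_trans hwc (le_trans hz1 hBz)
          linarith
        have := csInf_le hTbdd hzT
        rw [← hcdef] at this
        linarith
    -- conclude from a ∈ T
    have hfin : w b - w a ≤ B b - B a := haT.2
    have hBa : B a = 0 := by rw [hBdef]; simp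
    have hwa : w a = E a := by rw [hwdef]; simp
    have hBb : B b ≤ (∫ τ in Set.Icc a b, ρ τ) + ε := by
      have h1 : B b = ∫ τ in Set.Ioc a b, (Gt τ).toReal := by
        rw [hBdef]; exact intervalIntegral.integral_of_le hab
      have h2 : (∫ τ in Set.Ioc a b, (Gt τ).toReal) ≤ ∫ τ, (Gt τ).toReal :=
        setIntegral_le_integral hGtint (Filter.Eventually.of_forall (fun τ => hGt0 τ))
      have h3 : (∫ τ, ρhat τ) = ∫ τ in Set.Icc a b, ρ τ := by
        rw [hρhatdef]; exact integral_indicator measurableSet_Icc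
      rw [h1]
      linarith [hGtsum, h2]
    have hwb : w b = E b + ∫ τ in a..b, h₂ τ := by rw [hwdef]
    linarith
  clear_value E K ψ c₀
  -- total weight of the perturbation
  set I : ℝ := ∫ τ in Set.Ici t₀, ‖g τ‖ with hIdef
  have hI0 : 0 ≤ I := by
    rw [hIdef]
    exact setIntegral_nonneg measurableSet_Ici (fun τ _ => norm_nonneg _)
  have hgmono : ∀ a b : ℝ, t₀ ≤ a → a ≤ b → (∫ τ in Set.Icc a b, ‖g τ‖) ≤ I := by
    intro a b ha hab
    rw [hIdef]
    apply setIntegral_mono_set hgint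
      (Filter.Eventually.of_forall (fun τ => norm_nonneg _))
    exact HasSubset.Subset.eventuallyLE (fun τ hτ => le_trans ha hτ.1)
  have hρle : ∀ (M : ℝ) (a b : ℝ), t₀ ≤ a → a ≤ b → 0 ≤ M →
      (∀ τ ∈ Set.Icc a b, ‖x' τ‖ ≤ M) → (∫ τ in Set.Icc a b, ρ τ) ≤ M * I := by
    intro M a b ha hab hM0 hM
    have h1 : (∫ τ in Set.Icc a b, ρ τ) ≤ ∫ τ in Set.Icc a b, M * ‖g τ‖ := by
      apply setIntegral_mono_on (hρIcc a b ha hab)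
        ((hgint.mono_set (fun τ hτ => le_trans ha hτ.1)).const_mul M) measurableSet_Icc
      intro τ hτ
      rw [hρdef]
      simp only []
      calc ‖g τ‖ * ‖x' τ‖ ≤ ‖g τ‖ * M :=
            mul_le_mul_of_nonneg_left (hM τ hτ) (norm_nonneg _)
        _ = M * ‖g τ‖ := mul_comm _ _
    have h2 : (∫ τ in Set.Icc a b, M * ‖g τ‖) = M * ∫ τ in Set.Icc a b, ‖g τ‖ :=
      integral_const_mul M _
    rw [h2] at h1
    exact h1.trans (mul_le_mul_of_nonneg_left (hgmono a b ha hab) hM0)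
  -- Part 1: uniform bound on ‖x'‖
  set S : ℝ := Real.sqrt (I^2 + 2 * E t₀) with hSdef
  clear_value I
  have hS0 : 0 ≤ S := Real.sqrt_nonneg _
  have hS2 : S^2 = I^2 + 2 * E t₀ := by
    rw [hSdef]
    apply Real.sq_sqrt
    have := hE0 t₀ le_rfl
    nlinarith [sq_nonneg I]
  set C : ℝ := I + S with hCdef
  clear_value S
  have hC0 : 0 ≤ C := by rw [hCdef]; linarith
  have hC : ∀ t, t₀ ≤ t → ‖x' t‖ ≤ C := by
    intro t ht
    have hx'On : ContinuousOn (fun s => ‖x' s‖) (Set.Icc t₀ t) :=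
      fun s hs => ((hx'c s hs.1).norm).continuousWithinAt
    obtain ⟨ts, hts, hmax⟩ := isCompact_Icc.exists_isMaxOn (Set.nonempty_Icc.2 ht) hx'On
    set M : ℝ := ‖x' ts‖ with hMdef
    clear_value M
    have hM : ∀ s ∈ Set.Icc t₀ t, ‖x' s‖ ≤ M := by
      intro s hs
      rw [hMdef]
      exact hmax hs
    have hM0 : 0 ≤ M := hMdef ▸ norm_nonneg (x' ts)
    have hts0 : t₀ ≤ ts := hts.1
    have hk := key t₀ ts le_rfl hts0
    have hρb : (∫ τ in Set.Icc t₀ ts, ρ τ) ≤ M * I := by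
      apply hρle M t₀ ts le_rfl hts0 hM0
      intro τ hτ
      exact hM τ ⟨hτ.1, le_trans hτ.2 hts.2⟩
    have hint2 : 0 ≤ ∫ τ in t₀..ts, h₂ τ :=
      intervalIntegral.integral_nonneg hts0 (fun τ hτ => hh₂0 τ hτ.1)
    have hKts : K ts = (1/2) * M^2 := by rw [hKdef, hMdef]
    have hE1 : E ts ≤ E t₀ + M * I := by linarith [hk, hρb, hint2]
    have hEts : (1/2) * M^2 ≤ E t₀ + M * I := by
      have h1 := hKE ts hts0
      rw [hKts] at h1
      exact le_trans h1 hE1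
    have hMC : M ≤ C := by
      have h3 : (M - I)^2 ≤ S^2 := by nlinarith [hEts, hS2]
      rw [hCdef]
      nlinarith [h3, hS0]
    exact le_trans (hM t ⟨ht, le_rfl⟩) hMC
  clear_value C
  refine ⟨⟨C, hC⟩, ?_⟩
  -- Part 2: integrability of (1/t) ‖x'‖²
  have hbound : ∀ T : ℝ, t₀ ≤ T →
      (∫ τ in t₀..T, (1/τ) * ‖x' τ‖^2) ≤ (E t₀ + C * I) / α := by
    intro T hT
    have hk := key t₀ T le_rfl hT
    have hρb : (∫ τ in Set.Icc t₀ T, ρ τ) ≤ C * I := by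
      apply hρle C t₀ T le_rfl hT hC0
      intro τ hτ
      exact hC τ hτ.1
    have hET := hE0 T hT
    have h1 : (∫ τ in t₀..T, h₂ τ) ≤ E t₀ + C * I := by linarith
    have h2 : (∫ τ in t₀..T, h₂ τ) = α * ∫ τ in t₀..T, (1/τ) * ‖x' τ‖^2 := by
      rw [← intervalIntegral.integral_const_mul]
      apply intervalIntegral.integral_congr
      intro τ hτ
      rw [hh₂def]
      simp only []
      ring
    rw [h2] at h1
    rw [le_div_iff₀ hα]
    linarith
  have hione : ∀ i : ℕ, IntegrableOn (fun τ => (1/τ) * ‖x' τ‖^2)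
      (Set.Ioc t₀ (t₀ + i)) := by
    intro i
    have hcont : ContinuousOn (fun τ => (1/τ) * ‖x' τ‖^2) (Set.Icc t₀ (t₀ + i)) := by
      intro τ hτ
      have hτ0 : τ ≠ 0 := (lt_of_lt_of_le ht₀ hτ.1).ne'
      exact ((continuousAt_const.div continuousAt_id hτ0).mul
        (((hx'c τ hτ.1).norm).pow 2)).continuousWithinAt
    exact (hcont.integrableOn_compact isCompact_Icc).mono_set Set.Ioc_subset_Icc_self
  have himp : IntegrableOn (fun τ => (1/τ) * ‖x' τ‖^2) (Set.Ioi t₀) := by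
    apply MeasureTheory.integrableOn_Ioi_of_intervalIntegral_norm_bounded
      ((E t₀ + C * I) / α) t₀ hione
      (tendsto_atTop_add_const_left atTop t₀ tendsto_natCast_atTop_atTop)
    refine Filter.Eventually.of_forall (fun i => ?_)
    have hTi : t₀ ≤ t₀ + (i:ℝ) := le_add_of_nonneg_right (Nat.cast_nonneg i)
    have hnorm : (∫ τ in t₀..(t₀ + (i:ℝ)), ‖(1/τ) * ‖x' τ‖^2‖)
        = ∫ τ in t₀..(t₀ + (i:ℝ)), (1/τ) * ‖x' τ‖^2 := by
      apply intervalIntegral.integral_congr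
      intro τ hτ
      rw [Set.uIcc_of_le hTi] at hτ
      have hτ0 : (0:ℝ) < τ := lt_of_lt_of_le ht₀ hτ.1
      show ‖(1/τ) * ‖x' τ‖^2‖ = (1/τ) * ‖x' τ‖^2
      rw [Real.norm_eq_abs, abs_of_nonneg]
      have h1 : (0:ℝ) ≤ 1/τ := le_of_lt (by positivity)
      positivity
    rw [hnorm]
    exact hbound _ hTi
  rw [integrableOn_Ici_iff_integrableOn_Ioi]
  exact himp
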